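/- arXiv:1909.05837 — 3 statements merged into one kernel-verified Lean document; each statement's English description precedes it below -/
import Mathlib

section
/- Let f : {-1,1}^n → ℝ have Fourier expansion f(ε) = ∑_{S ⊆ [n]} a_S ∏_{k∈S} ε_k with all a_S ≥ 0. Define g : {-1,1}^n → ℝ by g(ε) = (1/2) ∑_{r=1}^n (f(ε) − f(ε with r-th coordinate flipped)). Then for any p ∈ ℕ and points X^(1),...,X^(p) ∈ {-1,1}^n, (1/p²) ∑_{i,j∈[p]} f(X^(i)·X^(j)) − 𝔼f ≤ (1/p²) ∑_{i,j∈[p]} g(X^(i)·X^(j)), where X^(i)·X^(j) denotes the coordinatewise product. -/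
theorem stmt_1 (n p : ℕ) (hp : 0 < p)
    (f g : (Fin n → ℝ) → ℝ) (a : Finset (Fin n) → ℝ)
    (ha : ∀ S, 0 ≤ a S)
    (hf : ∀ ε : Fin n → ℝ, (∀ k, ε k = 1 ∨ ε k = -1) →
      f ε = ∑ S : Finset (Fin n), a S * ∏ k ∈ S, ε k)
    (hg : ∀ ε : Fin n → ℝ, g ε = (1/2) * ∑ r : Fin n,
      (f ε - f (Function.update ε r (-(ε r)))))
    (X : Fin p → Fin n → ℝ)
    (hX : ∀ i k, X i k = 1 ∨ X i k = -1) :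
    (1 / (p : ℝ) ^ 2) * (∑ i : Fin p, ∑ j : Fin p, f (fun k => X i k * X j k)) - a ∅
      ≤ (1 / (p : ℝ) ^ 2) * ∑ i : Fin p, ∑ j : Fin p, g (fun k => X i k * X j k) := by
  have hflip : ∀ (ε : Fin n → ℝ), (∀ k, ε k = 1 ∨ ε k = -1) → ∀ (r : Fin n)
      (S : Finset (Fin n)),
      ∏ k ∈ S, Function.update ε r (-(ε r)) k
        = (if r ∈ S then (-1 : ℝ) else 1) * ∏ k ∈ S, ε k := by
    intro ε hε r S
    by_cases hr : r ∈ S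
    · rw [← Finset.mul_prod_erase S _ hr, ← Finset.mul_prod_erase S ε hr]
      have h1 : ∏ k ∈ S.erase r, Function.update ε r (-(ε r)) k
          = ∏ k ∈ S.erase r, ε k :=
        Finset.prod_congr rfl fun k hk =>
          Function.update_of_ne (Finset.ne_of_mem_erase hk) _ _
      rw [h1, Function.update_self]
      simp only [hr, if_true]
      ring
    · simp only [hr, if_false, one_mul]
      exact Finset.prod_congr rfl fun k hk =>
        Function.update_of_ne (by rintro rfl; exact hr hk) _ _
  have hgval : ∀ (ε : Fin n → ℝ), (∀ k, ε k = 1 ∨ ε k = -1) →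
      g ε = ∑ S : Finset (Fin n), ((S.card : ℝ) * a S) * ∏ k ∈ S, ε k := by
    intro ε hε
    have hε' : ∀ r : Fin n, ∀ k, Function.update ε r (-(ε r)) k = 1 ∨
        Function.update ε r (-(ε r)) k = -1 := by
      intro r k
      by_cases h : k = r
      · subst h; rw [Function.update_self]
        rcases hε k with h | h <;> simp [h]
      · rw [Function.update_of_ne h]; exact hε k
    rw [hg]
    have hd : ∀ r : Fin n, f ε - f (Function.update ε r (-(ε r)))
        = ∑ S : Finset (Fin n), (if r ∈ S then (2:ℝ) else 0) * (a S * ∏ k ∈ S, ε k) := by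
      intro r
      rw [hf ε hε, hf _ (hε' r), ← Finset.sum_sub_distrib]
      refine Finset.sum_congr rfl fun S _ => ?_
      rw [hflip ε hε r S]
      by_cases h : r ∈ S <;> simp [h] <;> ring
    simp only [hd]
    rw [Finset.sum_comm, Finset.mul_sum]
    refine Finset.sum_congr rfl fun S _ => ?_
    rw [← Finset.sum_mul, Finset.sum_ite_mem,
      Finset.univ_inter, Finset.sum_const, nsmul_eq_mul]
    ring
  have hpoint : ∀ i j : Fin p, ∀ k, X i k * X j k = 1 ∨ X i k * X j k = -1 := by
    intro i j k
    rcases hX i k with h | h <;> rcases hX j k with h' | h' <;> simp [h, h']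
  set c : Finset (Fin n) → ℝ := fun S => ∑ i : Fin p, ∏ k ∈ S, X i k with hc
  have key : ∀ (b : Finset (Fin n) → ℝ),
      ∑ i : Fin p, ∑ j : Fin p, ∑ S : Finset (Fin n),
        b S * ∏ k ∈ S, (X i k * X j k)
      = ∑ S : Finset (Fin n), b S * (c S)^2 := by
    intro b
    have h1 : ∀ i j : Fin p, ∑ S : Finset (Fin n), b S * ∏ k ∈ S, (X i k * X j k)
        = ∑ S : Finset (Fin n), b S * ((∏ k ∈ S, X i k) * ∏ k ∈ S, X j k) :=
      fun i j => Finset.sum_congr rfl fun S _ => by rw [Finset.prod_mul_distrib]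
    simp only [h1]
    have h2 : ∀ i : Fin p, ∑ j : Fin p, ∑ S : Finset (Fin n),
        b S * ((∏ k ∈ S, X i k) * ∏ k ∈ S, X j k)
        = ∑ S : Finset (Fin n), ∑ j : Fin p,
        b S * ((∏ k ∈ S, X i k) * ∏ k ∈ S, X j k) := fun i => Finset.sum_comm
    simp only [h2]
    rw [Finset.sum_comm]
    refine Finset.sum_congr rfl fun S _ => ?_
    simp only [hc, sq]
    rw [Finset.sum_mul_sum, Finset.mul_sum]
    exact (Finset.sum_congr rfl fun i _ => by rw [Finset.mul_sum]).symm
  have hfs : ∑ i : Fin p, ∑ j : Fin p, f (fun k => X i k * X j k)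
      = ∑ S : Finset (Fin n), a S * (c S)^2 := by
    rw [← key a]
    exact Finset.sum_congr rfl fun i _ => Finset.sum_congr rfl fun j _ =>
      hf _ (hpoint i j)
  have hgs : ∑ i : Fin p, ∑ j : Fin p, g (fun k => X i k * X j k)
      = ∑ S : Finset (Fin n), ((S.card : ℝ) * a S) * (c S)^2 := by
    rw [← key (fun S => (S.card : ℝ) * a S)]
    exact Finset.sum_congr rfl fun i _ => Finset.sum_congr rfl fun j _ =>
      hgval _ (hpoint i j)
  rw [hfs, hgs]
  have hp' : (0:ℝ) < (p:ℝ)^2 := by positivity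
  have hc0 : c ∅ = (p:ℝ) := by simp [hc]
  have main : ∑ S : Finset (Fin n), a S * (c S)^2 - a ∅ * (p:ℝ)^2
      ≤ ∑ S : Finset (Fin n), ((S.card : ℝ) * a S) * (c S)^2 := by
    have he : a ∅ * (p:ℝ)^2 = ∑ S : Finset (Fin n),
        (if S = ∅ then a ∅ * (p:ℝ)^2 else 0) := by
      rw [Finset.sum_ite_eq' Finset.univ ∅ (fun _ => a ∅ * (p:ℝ)^2)]
      simp
    rw [he, ← Finset.sum_sub_distrib]
    refine Finset.sum_le_sum fun S _ => ?_
    by_cases h : S = ∅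
    · subst h; simp [hc0]
    · simp only [h, if_false, sub_zero]
      have h1 : (1:ℝ) ≤ (S.card : ℝ) := by
        have := Finset.card_pos.mpr (Finset.nonempty_of_ne_empty h)
        exact_mod_cast this
      have h2 : 0 ≤ a S * (c S)^2 := mul_nonneg (ha S) (sq_nonneg _)
      calc a S * (c S)^2 = 1 * (a S * (c S)^2) := (one_mul _).symm
        _ ≤ (S.card : ℝ) * (a S * (c S)^2) := by
            exact mul_le_mul_of_nonneg_right h1 h2
        _ = ((S.card : ℝ) * a S) * (c S)^2 := by ring
  have : (1 / (p : ℝ) ^ 2) * ∑ S : Finset (Fin n), a S * (c S)^2 - a ∅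
      = (1 / (p : ℝ) ^ 2) * (∑ S : Finset (Fin n), a S * (c S)^2 - a ∅ * (p:ℝ)^2) := by
    field_simp
  rw [this]
  exact mul_le_mul_of_nonneg_left main (by positivity)
end

section
/- Let f₁, f₂ : {-1,1}^n → ℂ have Fourier expansions f₁(ε) = ∑_S a_S ∏_{k∈S} ε_k and f₂(ε) = ∑_S b_S ∏_{k∈S} ε_k with b_S ∈ [0,∞) and |a_S| ≤ b_S for all S ⊆ [n]. Define g(ε) = (1/2) ∑_{r=1}^n (f₂(ε) − f₂(ε flipped at r)). Then for any p ∈ ℕ and any X^(1),...,X^(p) ∈ {-1,1}^n, |(1/p²) ∑_{i,j∈[p]} f₁(X^(i)·X^(j)) − 𝔼f₁| ≤ (1/p²) ∑_{i,j∈[p]} g(X^(i)·X^(j)), and the right side is a real number. -/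
open Finset

private lemma prod_pm' {α : Type*} [DecidableEq α] (s : Finset α) (f : α → ℂ)
    (h : ∀ k, f k = 1 ∨ f k = -1) : (∏ k ∈ s, f k) = 1 ∨ (∏ k ∈ s, f k) = -1 := by
  induction s using Finset.induction_on with
  | empty => left; simp
  | @insert x s hx ih =>
    rw [Finset.prod_insert hx]
    rcases h x with h1 | h1 <;> rcases ih with h2 | h2 <;> simp [h1, h2]

theorem stmt_7 (n p : ℕ) (hp : 0 < p)
    (f₁ f₂ g : (Fin n → ℂ) → ℂ) (a : Finset (Fin n) → ℂ) (b : Finset (Fin n) → ℝ)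
    (hb : ∀ S, 0 ≤ b S) (hab : ∀ S, ‖a S‖ ≤ b S)
    (hf₁ : ∀ ε : Fin n → ℂ, (∀ k, ε k = 1 ∨ ε k = -1) →
      f₁ ε = ∑ S : Finset (Fin n), a S * ∏ k ∈ S, ε k)
    (hf₂ : ∀ ε : Fin n → ℂ, (∀ k, ε k = 1 ∨ ε k = -1) →
      f₂ ε = ∑ S : Finset (Fin n), (b S : ℂ) * ∏ k ∈ S, ε k)
    (hg : ∀ ε : Fin n → ℂ, g ε = (1/2) * ∑ r : Fin n,
      (f₂ ε - f₂ (Function.update ε r (-(ε r)))))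
    (X : Fin p → Fin n → ℂ)
    (hX : ∀ i k, X i k = 1 ∨ X i k = -1) :
    ‖(1/(p:ℂ)^2) * (∑ i : Fin p, ∑ j : Fin p,
        f₁ (fun k => X i k * X j k)) - a ∅‖
      ≤ ((1/(p:ℂ)^2) * ∑ i : Fin p, ∑ j : Fin p, g (fun k => X i k * X j k)).re ∧
    ((1/(p:ℂ)^2) * ∑ i : Fin p, ∑ j : Fin p, g (fun k => X i k * X j k)).im = 0 := by
  classical
  have hp0 : (p : ℝ) ≠ 0 := Nat.cast_ne_zero.2 hp.ne'
  set χ : Finset (Fin n) → Fin p → ℂ := fun S i => ∏ k ∈ S, X i k with hχdef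
  have hχpm : ∀ S i, χ S i = 1 ∨ χ S i = -1 := fun S i => prod_pm' S _ (hX i)
  set t : Finset (Fin n) → ℝ := fun S => (∑ i, χ S i).re with htdef
  have hc : ∀ S, (∑ i : Fin p, χ S i) = ((t S : ℝ) : ℂ) := by
    intro S
    have him : ∀ i : Fin p, (χ S i).im = 0 := by
      intro i; rcases hχpm S i with h | h <;> simp [h]
    apply Complex.ext
    · simp [htdef]
    · simp [Complex.im_sum, him]
  -- flip lemma
  have hflip : ∀ (ε : Fin n → ℂ) (r : Fin n) (S : Finset (Fin n)),
      (∏ k ∈ S, (Function.update ε r (-(ε r))) k)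
        = (if r ∈ S then -1 else 1) * ∏ k ∈ S, ε k := by
    intro ε r S
    have hrest : ∏ k ∈ S.erase r, (Function.update ε r (-(ε r))) k
        = ∏ k ∈ S.erase r, ε k :=
      Finset.prod_congr rfl fun k hk =>
        Function.update_of_ne (Finset.ne_of_mem_erase hk) _ _
    by_cases hr : r ∈ S
    · rw [if_pos hr, ← Finset.mul_prod_erase _ _ hr, ← Finset.mul_prod_erase _ ε hr,
        Function.update_self, hrest]
      ring
    · rw [if_neg hr, one_mul]
      exact Finset.prod_congr rfl fun k hk => Function.update_of_ne (by rintro rfl; exact hr hk) _ _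
  -- g at ±1 points
  have hgval : ∀ ε : Fin n → ℂ, (∀ k, ε k = 1 ∨ ε k = -1) →
      g ε = ∑ S : Finset (Fin n), ((S.card : ℂ) * (b S : ℂ)) * ∏ k ∈ S, ε k := by
    intro ε hε
    have hεflip : ∀ r k, (Function.update ε r (-(ε r))) k = 1 ∨
        (Function.update ε r (-(ε r))) k = -1 := by
      intro r k
      by_cases h : k = r
      · subst h; rw [Function.update_self]; rcases hε k with h | h <;> simp [h]
      · rw [Function.update_of_ne h]; exact hε k
    have hdiff : ∀ r : Fin n, f₂ ε - f₂ (Function.update ε r (-(ε r)))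
        = ∑ S : Finset (Fin n), (if r ∈ S then 2 * (b S : ℂ) * ∏ k ∈ S, ε k else 0) := by
      intro r
      rw [hf₂ ε hε, hf₂ _ (hεflip r), ← Finset.sum_sub_distrib]
      refine Finset.sum_congr rfl fun S _ => ?_
      rw [hflip ε r S]
      by_cases hr : r ∈ S
      · simp only [if_pos hr]; ring
      · simp only [if_neg hr]; ring
    rw [hg]
    simp only [hdiff]
    rw [Finset.sum_comm, Finset.mul_sum]
    refine Finset.sum_congr rfl fun S _ => ?_
    rw [Finset.sum_ite_mem, Finset.univ_inter, Finset.sum_const, nsmul_eq_mul]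
    ring
  -- key summation identity
  have key : ∀ (F : (Fin n → ℂ) → ℂ) (coef : Finset (Fin n) → ℂ),
      (∀ ε : Fin n → ℂ, (∀ k, ε k = 1 ∨ ε k = -1) →
        F ε = ∑ S : Finset (Fin n), coef S * ∏ k ∈ S, ε k) →
      (∑ i : Fin p, ∑ j : Fin p, F (fun k => X i k * X j k))
        = ∑ S : Finset (Fin n), coef S * ((t S : ℂ) * (t S : ℂ)) := by
    intro F coef hF
    have h1 : ∀ i j : Fin p, F (fun k => X i k * X j k)
        = ∑ S : Finset (Fin n), coef S * (χ S i * χ S j) := by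
      intro i j
      rw [hF _ (fun k => by
        rcases hX i k with h | h <;> rcases hX j k with h' | h' <;> simp [h, h'])]
      exact Finset.sum_congr rfl fun S _ => by rw [Finset.prod_mul_distrib]
    simp only [h1]
    have h2 : ∀ S, coef S * ((t S : ℂ) * (t S : ℂ))
        = ∑ i : Fin p, ∑ j : Fin p, coef S * (χ S i * χ S j) := by
      intro S
      rw [← hc S, Finset.sum_mul_sum, Finset.mul_sum]
      exact Finset.sum_congr rfl fun i _ => by rw [Finset.mul_sum]
    calc ∑ i : Fin p, ∑ j : Fin p, ∑ S : Finset (Fin n), coef S * (χ S i * χ S j)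
        = ∑ i : Fin p, ∑ S : Finset (Fin n), ∑ j : Fin p, coef S * (χ S i * χ S j) :=
          Finset.sum_congr rfl fun i _ => Finset.sum_comm
      _ = ∑ S : Finset (Fin n), ∑ i : Fin p, ∑ j : Fin p, coef S * (χ S i * χ S j) :=
          Finset.sum_comm
      _ = ∑ S : Finset (Fin n), coef S * ((t S : ℂ) * (t S : ℂ)) :=
          Finset.sum_congr rfl fun S _ => (h2 S).symm
  set q : Finset (Fin n) → ℝ := fun S => (t S / p)^2 with hqdef
  have hq0 : ∀ S, 0 ≤ q S := fun S => sq_nonneg _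
  have hqc : ∀ (z : ℂ) (S), (1/(p:ℂ)^2) * (z * ((t S : ℂ) * (t S : ℂ)))
      = z * ((q S : ℝ) : ℂ) := by
    intro z S
    have : ((p:ℝ) : ℂ) ≠ 0 := by exact_mod_cast hp0
    rw [hqdef]
    push_cast
    field_simp
  -- f₁ side
  have hF1 : (1/(p:ℂ)^2) * (∑ i : Fin p, ∑ j : Fin p, f₁ (fun k => X i k * X j k))
      = ∑ S : Finset (Fin n), a S * ((q S : ℝ) : ℂ) := by
    rw [key f₁ a hf₁, Finset.mul_sum]
    exact Finset.sum_congr rfl fun S _ => hqc (a S) S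
  have hF2 : (1/(p:ℂ)^2) * (∑ i : Fin p, ∑ j : Fin p, g (fun k => X i k * X j k))
      = (((∑ S : Finset (Fin n), (S.card : ℝ) * b S * q S) : ℝ) : ℂ) := by
    rw [key g (fun S => (S.card : ℂ) * (b S : ℂ)) hgval, Finset.mul_sum]
    rw [Finset.sum_congr rfl fun S _ => hqc _ S, Complex.ofReal_sum]
    refine Finset.sum_congr rfl fun S _ => ?_
    push_cast
    ring
  have hq_empty : q ∅ = 1 := by
    have ht : t ∅ = p := by
      simp [htdef, hχdef]
    rw [hqdef]
    simp [ht, hp0]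
  have hE1 : (1/(p:ℂ)^2) * (∑ i : Fin p, ∑ j : Fin p, f₁ (fun k => X i k * X j k)) - a ∅
      = ∑ S ∈ Finset.univ.erase ∅, a S * ((q S : ℝ) : ℂ) := by
    rw [hF1, ← Finset.sum_erase_add _ _ (Finset.mem_univ (∅ : Finset (Fin n))), hq_empty]
    push_cast
    ring
  refine ⟨?_, by rw [hF2]; simp⟩
  rw [hE1, hF2, Complex.ofReal_re]
  calc ‖∑ S ∈ Finset.univ.erase ∅, a S * ((q S : ℝ) : ℂ)‖
      ≤ ∑ S ∈ Finset.univ.erase ∅, ‖a S * ((q S : ℝ) : ℂ)‖ :=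
        norm_sum_le _ _
    _ ≤ ∑ S ∈ Finset.univ.erase ∅, (S.card : ℝ) * b S * q S := by
        refine Finset.sum_le_sum fun S hS => ?_
        have h1 : (1 : ℝ) ≤ S.card := by
          have : S ≠ ∅ := (Finset.mem_erase.1 hS).1
          exact_mod_cast Nat.one_le_iff_ne_zero.2 (fun h => this (Finset.card_eq_zero.1 h))
        rw [norm_mul, Complex.norm_real, Real.norm_eq_abs, abs_of_nonneg (hq0 S)]
        calc ‖a S‖ * q S ≤ b S * q S :=
              mul_le_mul_of_nonneg_right (hab S) (hq0 S)
          _ ≤ (S.card : ℝ) * b S * q S := by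
              nlinarith [mul_nonneg (hb S) (hq0 S)]
    _ ≤ ∑ S : Finset (Fin n), (S.card : ℝ) * b S * q S := by
        refine Finset.sum_le_sum_of_subset_of_nonneg (Finset.erase_subset _ _) ?_
        intro S _ _
        exact mul_nonneg (mul_nonneg (Nat.cast_nonneg _) (hb S)) (hq0 S)
end

section
/- Let A be an n×n matrix with nonnegative real entries, D a diagonal n×n matrix with nonnegative diagonal entries, and λ, γ > 0. For ε ∈ {-1,1}^n let D_ε be the diagonal matrix with entries ε₁,...,εₙ. Suppose ((λ+γ)I + D) − (λ D_ε + A) is invertible for all ε and the Neumann series ∑_{m≥0} ((λ+γ)I+D)^{-1}[(λD_ε + A)((λ+γ)I+D)^{-1}]^m converges to its inverse. Then the function f(ε) = tr[((λ+γ)I + D − λD_ε − A)^{-1}] (tr = normalized trace) has a Fourier expansion f(ε) = ∑_{S⊆[n]} a_S ∏_{k∈S} ε_k with a_S ≥ 0 for all S. -/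
open MvPolynomial Matrix Finset

def NN {n : ℕ} (p : MvPolynomial (Fin n) ℝ) : Prop := ∀ d, 0 ≤ p.coeff d

lemma NN_add {n : ℕ} {p q : MvPolynomial (Fin n) ℝ} (hp : NN p) (hq : NN q) : NN (p + q) :=
  fun d => by rw [coeff_add]; exact add_nonneg (hp d) (hq d)

lemma NN_mul {n : ℕ} {p q : MvPolynomial (Fin n) ℝ} (hp : NN p) (hq : NN q) : NN (p * q) := by
  intro d
  rw [coeff_mul]
  exact Finset.sum_nonneg fun x _ => mul_nonneg (hp _) (hq _)

lemma NN_C {n : ℕ} {r : ℝ} (hr : 0 ≤ r) : NN (C r : MvPolynomial (Fin n) ℝ) := by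
  intro d
  rw [coeff_C]
  split <;> simp [hr]

lemma NN_zero {n : ℕ} : NN (0 : MvPolynomial (Fin n) ℝ) := by simp [NN]

lemma NN_one {n : ℕ} : NN (1 : MvPolynomial (Fin n) ℝ) := by
  simpa using NN_C (n := n) (r := 1) zero_le_one

lemma NN_X {n : ℕ} (k : Fin n) : NN (X k : MvPolynomial (Fin n) ℝ) := by
  intro d
  rw [coeff_X']
  split <;> simp

lemma NN_sum {n : ℕ} {ι : Type*} (s : Finset ι) (f : ι → MvPolynomial (Fin n) ℝ)
    (h : ∀ i ∈ s, NN (f i)) : NN (∑ i ∈ s, f i) := by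
  classical
  induction s using Finset.induction with
  | empty => simpa using NN_zero
  | insert _ _ hx ih =>
    rw [Finset.sum_insert hx]
    exact NN_add (h _ (Finset.mem_insert_self _ _)) (ih fun i hi => h i (Finset.mem_insert_of_mem hi))

def NNM {n : ℕ} (M : Matrix (Fin n) (Fin n) (MvPolynomial (Fin n) ℝ)) : Prop := ∀ i j, NN (M i j)

lemma NNM_mul {n : ℕ} {M N : Matrix (Fin n) (Fin n) (MvPolynomial (Fin n) ℝ)}
    (hM : NNM M) (hN : NNM N) : NNM (M * N) := by
  intro i j
  rw [Matrix.mul_apply]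
  exact NN_sum _ _ fun k _ => NN_mul (hM i k) (hN k j)

lemma NNM_diagonal {n : ℕ} {v : Fin n → MvPolynomial (Fin n) ℝ} (hv : ∀ k, NN (v k)) :
    NNM (Matrix.diagonal v) := by
  intro i j
  rw [Matrix.diagonal_apply]
  split
  · exact hv i
  · exact NN_zero

lemma NNM_one {n : ℕ} : NNM (1 : Matrix (Fin n) (Fin n) (MvPolynomial (Fin n) ℝ)) := by
  rw [← Matrix.diagonal_one]
  exact NNM_diagonal fun _ => NN_one

lemma NNM_add {n : ℕ} {M N : Matrix (Fin n) (Fin n) (MvPolynomial (Fin n) ℝ)}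
    (hM : NNM M) (hN : NNM N) : NNM (M + N) := fun i j => by
  have : (M + N) i j = M i j + N i j := rfl
  rw [this]; exact NN_add (hM i j) (hN i j)

lemma NNM_pow {n : ℕ} {M : Matrix (Fin n) (Fin n) (MvPolynomial (Fin n) ℝ)}
    (hM : NNM M) : ∀ m : ℕ, NNM (M ^ m)
  | 0 => by rw [pow_zero]; exact NNM_one
  | (m+1) => by rw [pow_succ]; exact NNM_mul (NNM_pow hM m) hM

lemma NN_trace {n : ℕ} {M : Matrix (Fin n) (Fin n) (MvPolynomial (Fin n) ℝ)}
    (hM : NNM M) : NN (Matrix.trace M) :=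
  NN_sum _ _ fun i _ => hM i i

lemma key_monomial_sum {n : ℕ} (e : Fin n → ℕ) :
    0 ≤ ∑ b : Fin n → Bool, ∏ k, (if b k then (1:ℝ) else -1) ^ e k := by
  have h1 : ∑ b : Fin n → Bool, ∏ k, (if b k then (1:ℝ) else -1) ^ e k
      = ∏ k, ∑ v : Bool, (if v = true then (1:ℝ) else -1) ^ e k :=
    (Fintype.prod_sum (fun k (v : Bool) => (if v = true then (1:ℝ) else -1) ^ e k)).symm
  rw [h1]
  refine Finset.prod_nonneg fun k _ => ?_
  rw [Fintype.sum_bool]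
  norm_num
  rcases Nat.even_or_odd (e k) with h | h
  · rw [h.neg_one_pow]; norm_num
  · rw [h.neg_one_pow]; norm_num

lemma key_sum_nonneg {n : ℕ} (p : MvPolynomial (Fin n) ℝ) (hp : NN p) (S : Finset (Fin n)) :
    0 ≤ ∑ b : Fin n → Bool, (∏ k ∈ S, (if b k then (1:ℝ) else -1)) *
        MvPolynomial.eval (fun k => if b k then (1:ℝ) else -1) p := by
  have heval : ∀ b : Fin n → Bool,
      (∏ k ∈ S, (if b k then (1:ℝ) else -1)) *
        MvPolynomial.eval (fun k => if b k then (1:ℝ) else -1) p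
      = ∑ d ∈ p.support, p.coeff d *
          ∏ k, (if b k then (1:ℝ) else -1) ^ (d k + if k ∈ S then 1 else 0) := by
    intro b
    set x : Fin n → ℝ := fun k => if b k then 1 else -1 with hx
    have hS' : (∏ k, x k ^ (if k ∈ S then 1 else 0)) = ∏ k ∈ S, x k := by
      calc ∏ k, x k ^ (if k ∈ S then 1 else 0)
          = ∏ k, (if k ∈ S then x k else 1) :=
            Finset.prod_congr rfl (fun k _ => by split <;> simp)
        _ = ∏ k ∈ univ ∩ S, x k := Finset.prod_ite_mem _ _ _
        _ = ∏ k ∈ S, x k := by rw [univ_inter]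
    rw [eval_eq', Finset.mul_sum]
    refine Finset.sum_congr rfl fun d _ => ?_
    have h2 : (∏ k ∈ S, x k) * (p.coeff d * ∏ k, x k ^ d k)
        = p.coeff d * ((∏ k, x k ^ (if k ∈ S then 1 else 0)) * ∏ k, x k ^ d k) := by
      rw [hS']; ring
    rw [h2, ← Finset.prod_mul_distrib]
    congr 1
    exact Finset.prod_congr rfl fun k _ => by rw [← pow_add, Nat.add_comm]
  calc (0:ℝ) ≤ ∑ d ∈ p.support, p.coeff d *
        ∑ b : Fin n → Bool, ∏ k, (if b k then (1:ℝ) else -1) ^ (d k + if k ∈ S then 1 else 0) :=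
        Finset.sum_nonneg fun d _ => mul_nonneg (hp d) (key_monomial_sum _)
    _ = _ := by
        simp only [heval]
        rw [Finset.sum_comm]
        exact Finset.sum_congr rfl fun d _ => (Finset.mul_sum _ _ _)

theorem stmt_9 (n : ℕ) (hn : 0 < n)
    (A : Matrix (Fin n) (Fin n) ℝ) (hA : ∀ i j, 0 ≤ A i j)
    (d : Fin n → ℝ) (hd : ∀ k, 0 ≤ d k) (l γ : ℝ) (hl : 0 < l) (hγ : 0 < γ)
    (hinv : ∀ ε : Fin n → ℝ, (∀ k, ε k = 1 ∨ ε k = -1) →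
      IsUnit ((l+γ) • (1 : Matrix (Fin n) (Fin n) ℝ) + Matrix.diagonal d
        - (l • Matrix.diagonal ε + A)))
    (hser : ∀ ε : Fin n → ℝ, (∀ k, ε k = 1 ∨ ε k = -1) →
      HasSum (fun m : ℕ =>
        ((l+γ) • (1 : Matrix (Fin n) (Fin n) ℝ) + Matrix.diagonal d)⁻¹ *
          ((l • Matrix.diagonal ε + A) *
            ((l+γ) • (1 : Matrix (Fin n) (Fin n) ℝ) + Matrix.diagonal d)⁻¹) ^ m)
        (((l+γ) • (1 : Matrix (Fin n) (Fin n) ℝ) + Matrix.diagonal d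
          - (l • Matrix.diagonal ε + A))⁻¹)) :
    ∃ a : Finset (Fin n) → ℝ, (∀ S, 0 ≤ a S) ∧
      ∀ ε : Fin n → ℝ, (∀ k, ε k = 1 ∨ ε k = -1) →
        (1/(n:ℝ)) * Matrix.trace (((l+γ) • (1 : Matrix (Fin n) (Fin n) ℝ)
            + Matrix.diagonal d - (l • Matrix.diagonal ε + A))⁻¹)
          = ∑ S : Finset (Fin n), a S * ∏ k ∈ S, ε k := by
  classical
  -- setup
  set B : Matrix (Fin n) (Fin n) ℝ :=
    (l+γ) • (1 : Matrix (Fin n) (Fin n) ℝ) + Matrix.diagonal d with hBdef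
  have hgpos : ∀ k, 0 < l + γ + d k := fun k => by have := hd k; linarith
  set g : Fin n → ℝ := fun k => (l + γ + d k)⁻¹ with hg
  have hBdiag : B = Matrix.diagonal (fun k => l + γ + d k) := by
    rw [hBdef, Matrix.smul_one_eq_diagonal, Matrix.diagonal_add]
  have hBinv : B⁻¹ = Matrix.diagonal g := by
    apply Matrix.inv_eq_right_inv
    rw [hBdiag, Matrix.diagonal_mul_diagonal]
    rw [show (fun i => (l + γ + d i) * g i) = fun _ => (1:ℝ) from
      funext fun k => mul_inv_cancel₀ (ne_of_gt (hgpos k)), Matrix.diagonal_one]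
  -- polynomial matrices
  set Bp : Matrix (Fin n) (Fin n) (MvPolynomial (Fin n) ℝ) :=
    Matrix.diagonal (fun k => C (g k)) with hBp
  set Cp : Matrix (Fin n) (Fin n) (MvPolynomial (Fin n) ℝ) :=
    Matrix.diagonal (fun k => C l * X k) + A.map C with hCp
  have hgnn : ∀ k, 0 ≤ g k := fun k => inv_nonneg.2 (hgpos k).le
  set q : ℕ → MvPolynomial (Fin n) ℝ := fun m => Matrix.trace (Bp * (Cp * Bp) ^ m) with hq
  have hqNN : ∀ m, NN (q m) := by
    intro m
    apply NN_trace
    apply NNM_mul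
    · exact NNM_diagonal fun k => NN_C (hgnn k)
    · apply NNM_pow
      apply NNM_mul
      · apply NNM_add
        · exact NNM_diagonal fun k => NN_mul (NN_C hl.le) (NN_X k)
        · intro i j
          exact NN_C (hA i j)
      · exact NNM_diagonal fun k => NN_C (hgnn k)
  have hqeval : ∀ (ε : Fin n → ℝ) (m : ℕ),
      MvPolynomial.eval ε (q m)
        = Matrix.trace (B⁻¹ * ((l • Matrix.diagonal ε + A) * B⁻¹) ^ m) := by
    intro ε m
    set φ : MvPolynomial (Fin n) ℝ →+* ℝ := (MvPolynomial.eval ε : MvPolynomial (Fin n) ℝ →+* ℝ)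
    have htr : ∀ M : Matrix (Fin n) (Fin n) (MvPolynomial (Fin n) ℝ),
        φ (Matrix.trace M) = Matrix.trace (M.map ⇑φ) := by
      intro M
      rw [Matrix.trace, Matrix.trace, map_sum]
      rfl
    have hmap : (Bp * (Cp * Bp) ^ m).map ⇑φ
        = B⁻¹ * ((l • Matrix.diagonal ε + A) * B⁻¹) ^ m := by
      have hBpm : Bp.map ⇑φ = B⁻¹ := by
        rw [hBp, Matrix.diagonal_map (map_zero φ), hBinv]
        congr 1
        funext k
        simp [φ]
      have hCpm : Cp.map ⇑φ = l • Matrix.diagonal ε + A := by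
        rw [hCp, Matrix.map_add ⇑φ (map_add φ), Matrix.diagonal_map (map_zero φ)]
        have h1 : (fun k => φ (C l * X k)) = fun k => l * ε k := by
          funext k; simp [φ]
        have h3 : (A.map ⇑C).map ⇑φ = A := by
          rw [Matrix.map_map]
          convert Matrix.map_id A
          funext x
          simp [φ, Function.comp]
        rw [h1, h3]
        congr 1
        exact Matrix.diagonal_smul l ε
      calc (Bp * (Cp * Bp) ^ m).map ⇑φ
          = φ.mapMatrix (Bp * (Cp * Bp) ^ m) := rfl
        _ = φ.mapMatrix Bp * (φ.mapMatrix Cp * φ.mapMatrix Bp) ^ m := by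
            rw [_root_.map_mul, _root_.map_pow, _root_.map_mul]
        _ = B⁻¹ * ((l • Matrix.diagonal ε + A) * B⁻¹) ^ m := by
            simp only [RingHom.mapMatrix_apply, hBpm, hCpm]
    rw [hq]
    show φ (Matrix.trace (Bp * (Cp * Bp) ^ m)) = _
    rw [htr, hmap]
  -- the hypercube points
  set εf : (Fin n → Bool) → (Fin n → ℝ) := fun b k => if b k then 1 else -1 with hεf
  have hεf1 : ∀ b, ∀ k, εf b k = 1 ∨ εf b k = -1 := by
    intro b k
    by_cases h : b k <;> simp [hεf, h]
  -- f and HasSum for traces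
  set f : (Fin n → ℝ) → ℝ := fun ε =>
    (1/(n:ℝ)) * Matrix.trace ((B - (l • Matrix.diagonal ε + A))⁻¹) with hf
  have htraceSum : ∀ ε : Fin n → ℝ, (∀ k, ε k = 1 ∨ ε k = -1) →
      HasSum (fun m => (1/(n:ℝ)) * MvPolynomial.eval ε (q m)) (f ε) := by
    intro ε hε
    have h1 := hser ε hε
    have h2 := h1.map (Matrix.traceLinearMap (Fin n) ℝ ℝ).toAddMonoidHom
      (LinearMap.continuous_of_finiteDimensional _)
    have h3 := h2.mul_left (1/(n:ℝ))
    have heq : (fun m : ℕ => (1/(n:ℝ)) * MvPolynomial.eval ε (q m))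
        = fun m => (1/(n:ℝ)) *
            ((Matrix.traceLinearMap (Fin n) ℝ ℝ).toAddMonoidHom ∘
              fun m => B⁻¹ * ((l • Matrix.diagonal ε + A) * B⁻¹) ^ m) m := by
      funext m
      rw [hqeval]
      rfl
    rw [hf, heq]
    exact h3
  -- define coefficients
  set a : Finset (Fin n) → ℝ := fun S =>
    (∑ b : Fin n → Bool, (∏ k ∈ S, εf b k) * f (εf b)) / 2 ^ n with ha
  refine ⟨a, ?_, ?_⟩
  · -- nonnegativity
    intro S
    rw [ha]
    apply div_nonneg _ (by positivity)
    have hsum : HasSum (fun m => ∑ b : Fin n → Bool,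
        (∏ k ∈ S, εf b k) * ((1/(n:ℝ)) * MvPolynomial.eval (εf b) (q m)))
        (∑ b : Fin n → Bool, (∏ k ∈ S, εf b k) * f (εf b)) := by
      apply hasSum_sum
      intro b _
      exact (htraceSum (εf b) (hεf1 b)).mul_left _
    refine hasSum_le (f := fun _ : ℕ => (0:ℝ)) ?_ hasSum_zero hsum
    intro m
    have h0 : ∑ b : Fin n → Bool,
        (∏ k ∈ S, εf b k) * ((1/(n:ℝ)) * MvPolynomial.eval (εf b) (q m))
        = (1/(n:ℝ)) * ∑ b : Fin n → Bool,
            (∏ k ∈ S, (if b k then (1:ℝ) else -1)) *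
              MvPolynomial.eval (fun k => if b k then (1:ℝ) else -1) (q m) := by
      rw [Finset.mul_sum]
      exact Finset.sum_congr rfl fun b _ => by rw [hεf]; ring
    rw [h0]
    exact mul_nonneg (by positivity) (key_sum_nonneg _ (hqNN m) S)
  · -- Fourier expansion
    intro ε hε
    set b₀ : Fin n → Bool := fun k => decide (ε k = 1) with hb₀
    have hb₀true : ∀ k, ε k = 1 → b₀ k = true := by
      intro k h; simp [hb₀, h]
    have hb₀false : ∀ k, ε k = -1 → b₀ k = false := by
      intro k h
      simp only [hb₀, h, decide_eq_false_iff_not]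
      norm_num
    have hεb₀ : εf b₀ = ε := by
      funext k
      rcases hε k with h | h
      · rw [hεf]; simp only [hb₀true k h, if_true]; rw [h]
      · rw [hεf]; simp only [hb₀false k h]; rw [h]; norm_num
    have horth : ∀ b : Fin n → Bool,
        ∑ S : Finset (Fin n), (∏ k ∈ S, εf b k) * (∏ k ∈ S, ε k)
          = if b = b₀ then (2:ℝ) ^ n else 0 := by
      intro b
      have h1 : ∑ S : Finset (Fin n), (∏ k ∈ S, εf b k) * (∏ k ∈ S, ε k)
          = ∏ k, (εf b k * ε k + 1) := by
        rw [Fintype.prod_add]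
        refine Finset.sum_congr rfl fun S _ => ?_
        rw [Finset.prod_const_one, mul_one, Finset.prod_mul_distrib]
      rw [h1]
      by_cases hb : b = b₀
      · subst hb
        rw [if_pos rfl]
        have : ∀ k, εf b₀ k * ε k + 1 = 2 := by
          intro k
          have : εf b₀ k = ε k := by rw [hεb₀]
          rw [this]
          rcases hε k with h | h <;> rw [h] <;> norm_num
        rw [Finset.prod_congr rfl fun k _ => this k, Finset.prod_const, Finset.card_univ,
          Fintype.card_fin]
      · rw [if_neg hb]
        obtain ⟨k, hk⟩ : ∃ k, b k ≠ b₀ k := by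
          by_contra h
          push_neg at h
          exact hb (funext h)
        apply Finset.prod_eq_zero (Finset.mem_univ k)
        rcases hε k with h | h
        · have hbk : b k = false := by
            rw [hb₀true k h] at hk
            simpa using hk
          simp [hεf, hbk, h]
        · have hbk : b k = true := by
            rw [hb₀false k h] at hk
            simpa using hk
          simp [hεf, hbk, h]
    have : ∑ S : Finset (Fin n), a S * ∏ k ∈ S, ε k = f ε := by
      calc ∑ S : Finset (Fin n), a S * ∏ k ∈ S, ε k
          = ∑ S : Finset (Fin n), (∑ b : Fin n → Bool,
              ((∏ k ∈ S, εf b k) * f (εf b)) * (∏ k ∈ S, ε k)) / 2 ^ n := by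
            refine Finset.sum_congr rfl fun S _ => ?_
            rw [ha, div_mul_eq_mul_div, Finset.sum_mul]
        _ = (∑ b : Fin n → Bool, f (εf b) *
              ∑ S : Finset (Fin n), (∏ k ∈ S, εf b k) * (∏ k ∈ S, ε k)) / 2 ^ n := by
            rw [← Finset.sum_div]
            congr 1
            rw [Finset.sum_comm]
            refine Finset.sum_congr rfl fun b _ => ?_
            rw [Finset.mul_sum]
            exact Finset.sum_congr rfl fun S _ => by ring
        _ = f ε := by
            have : ∑ b : Fin n → Bool, f (εf b) *
                ∑ S : Finset (Fin n), (∏ k ∈ S, εf b k) * (∏ k ∈ S, ε k)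
                = f (εf b₀) * 2 ^ n := by
              rw [Finset.sum_eq_single b₀]
              · rw [horth b₀, if_pos rfl]
              · intro b _ hb
                rw [horth b, if_neg hb, mul_zero]
              · intro h
                exact absurd (Finset.mem_univ b₀) h
            rw [this, hεb₀, mul_div_assoc, div_self (by positivity), mul_one]
    exact this.symm
end
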